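/- Let s ∈ ℝ and let w : ℤⁿ × Gr(d,n) → (0,∞) be a weight such that Σ_{A ∈ Ω_k} w(k,A)² ≤ C_w² for every k ∈ ℤⁿ and such that W_k := Σ_{A ∈ Ω_k} w(k,A)² ≥ c_w² for every k ∈ ℤⁿ, for some constants C_w, c_w > 0. Then for every f ∈ L²(𝕋ⁿ) one has the stability estimate Σ_{k ∈ ℤⁿ} ⟨k⟩^{2s} |f̂(k)|² ≤ c_w^{−2} Σ_{A ∈ Gr(d,n)} Σ_{k ∈ ℤⁿ} ⟨k⟩^{2s} w(k,A)² |\widehat{R_{d,A} f}(k)|², i.e. ‖f‖_{H^s(𝕋ⁿ)} ≤ (1/c_w) ‖R_d f‖_{L_s^{2,2}(X_{d,n};w)} (both sides possibly infinite). -/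

import Mathlib

noncomputable section
open MeasureTheory Real
open scoped ENNReal NNReal

instance : Fact ((0:ℝ) < 1) := ⟨one_pos⟩

/-- The flat torus `𝕋ⁿ = ℝⁿ/ℤⁿ`, with the probability Haar (Lebesgue) measure. -/
abbrev Torus (n : ℕ) := Fin n → AddCircle (1:ℝ)

/-- The quotient map `π : ℝⁿ → 𝕋ⁿ`. -/
def tmap {n : ℕ} (x : Fin n → ℝ) : Torus n := fun i => (x i : AddCircle (1:ℝ))

/-- The character `x ↦ e^{2πi k·x}` on the torus. -/
def char {n : ℕ} (k : Fin n → ℤ) (x : Torus n) : ℂ := ∏ i, fourier (k i) (x i)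

/-- The Fourier coefficient `f̂(k) = ∫ f(x) e^{−2πi k·x} dx`. -/
def fCoeff {n : ℕ} (f : Torus n → ℂ) (k : Fin n → ℤ) : ℂ := ∫ x, char (-k) x * f x

/-- The `d`-plane Radon transform on `𝕋ⁿ` associated to integer vectors `v₁, …, v_d`:
`R f(x) = ∫_{[0,1]^d} f(x + t₁v₁ + ⋯ + t_d v_d) dt`. -/
def radon {n d : ℕ} (v : Fin d → Fin n → ℤ) (f : Torus n → ℂ) (x : Torus n) : ℂ :=
  ∫ t in Set.Icc (0 : Fin d → ℝ) 1, f (x + tmap fun i => ∑ j, t j * (v j i : ℝ))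

/-- The Grassmannian `Gr(d,n)`: `d`-dimensional `ℚ`-linear subspaces of `ℚⁿ`. -/
def Gr (d n : ℕ) : Type := {A : Submodule ℚ (Fin n → ℚ) // Module.finrank ℚ A = d}

/-- `A ∈ Ω_k` iff `k ⊥ A`, i.e. `k·q = 0` for all `q ∈ A`. -/
def perp {n : ℕ} (d : ℕ) (k : Fin n → ℤ) : Set (Gr d n) :=
  {A | ∀ q ∈ A.1, ∑ i, (k i : ℚ) * q i = 0}

/-- `V` is a basis of integer vectors for `A ∈ Gr(d,n)`. -/
def IsIntBasis {n d : ℕ} (A : Gr d n) (V : Fin d → Fin n → ℤ) : Prop :=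
  LinearIndependent ℚ (fun j => fun i => (V j i : ℚ)) ∧
    Submodule.span ℚ (Set.range (fun j => fun i => (V j i : ℚ))) = A.1

/-- `W_k = Σ_{A ∈ Ω_k} w(k,A)²`. -/
def Wk {n : ℕ} (d : ℕ) (w : (Fin n → ℤ) → Gr d n → ℝ) (k : Fin n → ℤ) : ℝ :=
  (∑' A : perp d k, ENNReal.ofReal (w k A.1 ^ 2)).toReal

/-- `⟨k⟩² = 1 + |k|²` for `k ∈ ℤⁿ`. -/
def nrmSqN {n : ℕ} (k : Fin n → ℤ) : ℝ := 1 + ∑ i, (k i : ℝ)^2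

instance : IsProbabilityMeasure (volume : Measure (AddCircle (1:ℝ))) :=
  ⟨by rw [AddCircle.measure_univ]; simp⟩

lemma norm_fourier_eq_one {m : ℤ} {y : AddCircle (1:ℝ)} : ‖fourier m y‖ = 1 := by
  rw [fourier_apply]; exact Circle.norm_coe _

lemma norm_char_le_one {n : ℕ} (k : Fin n → ℤ) (x : Torus n) : ‖char k x‖ ≤ 1 := by
  unfold char
  rw [norm_prod]
  simp [norm_fourier_eq_one, Circle.norm_coe]

lemma char_add {n : ℕ} (k : Fin n → ℤ) (x y : Torus n) :
    char k (x + y) = char k x * char k y := by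
  unfold char
  rw [← Finset.prod_mul_distrib]
  refine Finset.prod_congr rfl fun i _ => ?_
  have hxy : (x + y) i = x i + y i := rfl
  rw [hxy, fourier_apply, fourier_apply, fourier_apply, smul_add, AddCircle.toCircle_add]
  push_cast
  ring

lemma char_tmap {n : ℕ} (k : Fin n → ℤ) (r : Fin n → ℝ) :
    char k (tmap r) = Complex.exp (2 * π * Complex.I * ∑ i, (k i : ℝ) * r i) := by
  unfold char tmap
  simp_rw [fourier_coe_apply]
  rw [← Complex.exp_sum]
  congr 1
  push_cast
  rw [Finset.mul_sum]
  apply Finset.sum_congr rfl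
  intros; ring

lemma char_shift_eq_one {n d : ℕ} (v : Fin d → Fin n → ℤ) (k : Fin n → ℤ)
    (hk : ∀ j, ∑ i, k i * v j i = 0) (t : Fin d → ℝ) :
    char (-k) (tmap fun i => ∑ j, t j * (v j i : ℝ)) = 1 := by
  rw [char_tmap]
  have hS : ∑ i, ((-k) i : ℝ) * ∑ j, t j * (v j i : ℝ) = 0 := by
    have h : ∀ j, ∑ i, (k i : ℝ) * (v j i : ℝ) = 0 := by
      intro j
      have : ((∑ i, k i * v j i : ℤ) : ℝ) = 0 := by rw [hk j]; norm_num
      push_cast at this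
      exact this
    calc ∑ i, ((-k) i : ℝ) * ∑ j, t j * (v j i : ℝ)
        = ∑ j, (-(t j)) * ∑ i, (k i : ℝ) * (v j i : ℝ) := by
          simp_rw [Finset.mul_sum]
          rw [Finset.sum_comm]
          apply Finset.sum_congr rfl; intro j _
          apply Finset.sum_congr rfl; intro i _
          simp only [Pi.neg_apply, Int.cast_neg]
          ring
      _ = 0 := by simp [h]
  rw [hS]; simp

lemma fCoeff_radon_eq {n d : ℕ} (v : Fin d → Fin n → ℤ) (k : Fin n → ℤ)
    (hk : ∀ j, ∑ i, k i * v j i = 0) (f : Torus n → ℂ)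
    (hf : Integrable f (volume : Measure (Torus n))) :
    fCoeff (radon v f) k = fCoeff f k := by
  classical
  set γ : (Fin d → ℝ) → Torus n := fun t => tmap fun i => ∑ j, t j * (v j i : ℝ) with hγdef
  have hγc : Continuous γ := by
    apply continuous_pi; intro i
    exact (AddCircle.continuous_mk' 1).comp
      (continuous_finset_sum _ fun j _ => (continuous_apply j).mul continuous_const)
  set ν := (volume : Measure (Fin d → ℝ)).restrict (Set.Icc 0 1) with hνdef
  set μ := (volume : Measure (Torus n)) with hμdef
  haveI : IsProbabilityMeasure ν := by
    constructor; rw [hνdef, Measure.restrict_apply_univ, Real.volume_Icc_pi]; simp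
  have MPsnd : MeasurePreserving Prod.snd (ν.prod μ) μ :=
    ⟨measurable_snd, by rw [Measure.map_snd_prod, measure_univ, one_smul]⟩
  have MPshear : MeasurePreserving
      (fun p : (Fin d → ℝ) × Torus n => (p.1, p.2 + γ p.1)) (ν.prod μ) (ν.prod μ) := by
    refine (MeasurePreserving.id ν).skew_product (g := fun t x => x + γ t)
      (measurable_snd.add (hγc.measurable.comp measurable_fst))
      (Filter.Eventually.of_forall fun t => ?_)
    exact map_add_right_eq_self μ (γ t)
  have MP : MeasurePreserving (fun p : (Fin d → ℝ) × Torus n => p.2 + γ p.1) (ν.prod μ) μ :=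
    MPsnd.comp MPshear
  have hcharc : Continuous (char (-k) : Torus n → ℂ) := by
    unfold char
    exact continuous_finset_prod _ fun i _ => (fourier ((-k) i)).continuous.comp (continuous_apply i)
  have hint : Integrable
      (fun p : (Fin d → ℝ) × Torus n => char (-k) p.2 * f (p.2 + γ p.1)) (ν.prod μ) := by
    have h1 : Integrable ((fun x => f x) ∘ (fun p : (Fin d → ℝ) × Torus n => p.2 + γ p.1))
        (ν.prod μ) := (MP.integrable_comp hf.1).2 hf
    exact h1.bdd_mul ((hcharc.comp continuous_snd).aestronglyMeasurable)
      (c := 1) (Filter.Eventually.of_forall fun p => norm_char_le_one _ _)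
  have inner : ∀ t : Fin d → ℝ, (∫ x, char (-k) x * f (x + γ t) ∂μ) = fCoeff f k := by
    intro t
    have h1 : char (-k) (γ t) = 1 := char_shift_eq_one v k hk t
    have h2 := integral_add_right_eq_self (μ := μ) (fun x => char (-k) (x - γ t) * f x) (γ t)
    simp only [add_sub_cancel_right] at h2
    rw [h2]
    unfold fCoeff
    apply integral_congr_ae
    filter_upwards with x
    have : char (-k) (x - γ t) * char (-k) (γ t) = char (-k) x := by
      rw [← char_add]; congr 1; exact sub_add_cancel x (γ t)
    rw [← this, h1, mul_one]
  calc fCoeff (radon v f) k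
      = ∫ x, ∫ t, char (-k) x * f (x + γ t) ∂ν ∂μ := by
        unfold fCoeff radon
        congr 1; funext x
        exact (integral_const_mul _ _).symm
    _ = ∫ t, ∫ x, char (-k) x * f (x + γ t) ∂μ ∂ν := by
        apply integral_integral_swap
        exact hint.swap
    _ = ∫ t, fCoeff f k ∂ν := by simp_rw [inner]
    _ = fCoeff f k := by simp

theorem radon_stability_estimate
    (n d : ℕ) (hn : 2 ≤ n) (hd1 : 1 ≤ d) (hd2 : d ≤ n - 1) (s : ℝ)
    (V : (A : Gr d n) → Fin d → Fin n → ℤ) (hV : ∀ A : Gr d n, IsIntBasis A (V A))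
    (w : (Fin n → ℤ) → Gr d n → ℝ) (hw : ∀ k A, 0 < w k A)
    (Cw cw : ℝ) (hCw : 0 < Cw) (hcw : 0 < cw)
    (hsum : ∀ k : Fin n → ℤ,
      ∑' A : perp d k, ENNReal.ofReal (w k A.1 ^ 2) ≤ ENNReal.ofReal (Cw ^ 2))
    (hlow : ∀ k : Fin n → ℤ,
      ENNReal.ofReal (cw ^ 2) ≤ ∑' A : perp d k, ENNReal.ofReal (w k A.1 ^ 2))
    (f : Torus n → ℂ) (hf : MemLp f 2 (volume : Measure (Torus n))) :
    ∑' k : Fin n → ℤ, ENNReal.ofReal (nrmSqN k ^ s) * (‖fCoeff f k‖₊ : ℝ≥0∞) ^ 2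
      ≤ (ENNReal.ofReal (cw ^ 2))⁻¹ *
          ∑' (A : Gr d n) (k : Fin n → ℤ),
            ENNReal.ofReal (nrmSqN k ^ s * w k A ^ 2) *
              (‖fCoeff (radon (V A) f) k‖₊ : ℝ≥0∞) ^ 2 := by

  classical
  have hfInt : Integrable f (volume : Measure (Torus n)) :=
    (hf.mono_exponent (by norm_num : (1:ℝ≥0∞) ≤ 2)).integrable le_rfl
  have key : ∀ (k : Fin n → ℤ) (A : perp d k),
      fCoeff (radon (V A.1) f) k = fCoeff f k := by
    intro k A
    refine fCoeff_radon_eq _ _ (fun j => ?_) f hfInt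
    have hmem : (fun i => (V A.1 j i : ℚ)) ∈ (A.1).1 := by
      rw [← (hV A.1).2]; exact Submodule.subset_span ⟨j, rfl⟩
    have h1 : ∑ i, (k i : ℚ) * (V A.1 j i : ℚ) = 0 := A.2 _ hmem
    have h2 : ((∑ i, k i * V A.1 j i : ℤ) : ℚ) = 0 := by push_cast; exact h1
    exact_mod_cast h2
  have hnrm : ∀ k : Fin n → ℤ, 0 ≤ nrmSqN k ^ s := by
    intro k
    apply Real.rpow_nonneg
    unfold nrmSqN; positivity
  have main : ENNReal.ofReal (cw ^ 2) *
      (∑' k : Fin n → ℤ, ENNReal.ofReal (nrmSqN k ^ s) * (‖fCoeff f k‖₊ : ℝ≥0∞) ^ 2)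
      ≤ ∑' (A : Gr d n) (k : Fin n → ℤ),
          ENNReal.ofReal (nrmSqN k ^ s * w k A ^ 2) *
            (‖fCoeff (radon (V A) f) k‖₊ : ℝ≥0∞) ^ 2 := by
    rw [← ENNReal.tsum_mul_left,
      show (∑' (A : Gr d n) (k : Fin n → ℤ),
          ENNReal.ofReal (nrmSqN k ^ s * w k A ^ 2) *
            (‖fCoeff (radon (V A) f) k‖₊ : ℝ≥0∞) ^ 2)
        = ∑' (k : Fin n → ℤ) (A : Gr d n),
          ENNReal.ofReal (nrmSqN k ^ s * w k A ^ 2) *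
            (‖fCoeff (radon (V A) f) k‖₊ : ℝ≥0∞) ^ 2 from ENNReal.tsum_comm]
    refine ENNReal.tsum_le_tsum fun k => ?_
    calc ENNReal.ofReal (cw ^ 2) *
          (ENNReal.ofReal (nrmSqN k ^ s) * (‖fCoeff f k‖₊ : ℝ≥0∞) ^ 2)
        ≤ (∑' A : perp d k, ENNReal.ofReal (w k A.1 ^ 2)) *
          (ENNReal.ofReal (nrmSqN k ^ s) * (‖fCoeff f k‖₊ : ℝ≥0∞) ^ 2) :=
          mul_le_mul_left (hlow k) _
      _ = ∑' A : perp d k, ENNReal.ofReal (w k A.1 ^ 2) *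
          (ENNReal.ofReal (nrmSqN k ^ s) * (‖fCoeff f k‖₊ : ℝ≥0∞) ^ 2) :=
          ENNReal.tsum_mul_right.symm
      _ = ∑' A : perp d k, ENNReal.ofReal (nrmSqN k ^ s * w k A.1 ^ 2) *
          (‖fCoeff (radon (V A.1) f) k‖₊ : ℝ≥0∞) ^ 2 := by
          refine tsum_congr fun A => ?_
          rw [key k A, ENNReal.ofReal_mul (hnrm k)]
          ring
      _ ≤ ∑' A : Gr d n, ENNReal.ofReal (nrmSqN k ^ s * w k A ^ 2) *
          (‖fCoeff (radon (V A) f) k‖₊ : ℝ≥0∞) ^ 2 := by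
          rw [tsum_subtype (perp d k) (fun A => ENNReal.ofReal (nrmSqN k ^ s * w k A ^ 2) *
            (‖fCoeff (radon (V A) f) k‖₊ : ℝ≥0∞) ^ 2)]
          exact ENNReal.tsum_le_tsum fun A => Set.indicator_le_self _ _ A
  have hc0 : ENNReal.ofReal (cw ^ 2) ≠ 0 := by
    simp [ENNReal.ofReal_eq_zero, not_le, pow_pos hcw, hcw.ne']
  calc (∑' k : Fin n → ℤ, ENNReal.ofReal (nrmSqN k ^ s) * (‖fCoeff f k‖₊ : ℝ≥0∞) ^ 2)
      = (ENNReal.ofReal (cw ^ 2))⁻¹ * (ENNReal.ofReal (cw ^ 2) *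
          ∑' k : Fin n → ℤ, ENNReal.ofReal (nrmSqN k ^ s) * (‖fCoeff f k‖₊ : ℝ≥0∞) ^ 2) := by
        rw [← mul_assoc, ENNReal.inv_mul_cancel hc0 ENNReal.ofReal_ne_top, one_mul]
    _ ≤ _ := mul_le_mul_right main _
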